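/- Let Δ be a finite root system with weight lattice P. Fix λ, ν ∈ P and M ∈ ℕ. Then there are only finitely many μ ∈ P such that both λ − μ and μ − ν can be written as a sum of roots containing at most M negative roots each. -/
import Mathlib

/-- Auxiliary bound: the cardinality of a multiset of roots with at most `M`
negative roots is bounded in terms of the height of its sum. -/
lemma sum_roots_card_bound {P : Type*} [AddCommGroup P] [DecidableEq P]
    (Δpos : Finset P) (ht : P →+ ℤ) (hht : ∀ α ∈ Δpos, 0 < ht α)
    (C : ℕ) (hC : ∀ α ∈ Δpos, ht α ≤ C) (M : ℕ) (S : Multiset P)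
    (hS : ∀ x ∈ S, x ∈ Δpos ∨ -x ∈ Δpos)
    (hM : Multiset.card (S.filter fun x => -x ∈ Δpos) ≤ M) :
    (Multiset.card S : ℤ) ≤ ht S.sum + M * C + M := by
  classical
  set p : P → Prop := fun x => -x ∈ Δpos with hp
  have hsplit : S.filter p + S.filter (fun x => ¬ p x) = S := Multiset.filter_add_not p S
  set Sn := S.filter p with hSn
  set Sp := S.filter (fun x => ¬ p x) with hSp
  have h1 : ∀ y ∈ Sp.map ht, (1:ℤ) ≤ y := by
    intro y hy
    obtain ⟨x, hx, rfl⟩ := Multiset.mem_map.1 hy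
    have hx' := Multiset.mem_filter.1 hx
    have : x ∈ Δpos := (hS x hx'.1).resolve_right hx'.2
    exact hht x this
  have h2 : ∀ y ∈ Sn.map ht, (-(C:ℤ)) ≤ y := by
    intro y hy
    obtain ⟨x, hx, rfl⟩ := Multiset.mem_map.1 hy
    have hx' := Multiset.mem_filter.1 hx
    have := hC _ hx'.2
    rw [map_neg] at this
    omega
  have hsumP : (Multiset.card Sp : ℤ) ≤ (Sp.map ht).sum := by
    have := Multiset.card_nsmul_le_sum h1
    simpa using this
  have hsumN : (Multiset.card Sn : ℤ) * (-(C:ℤ)) ≤ (Sn.map ht).sum := by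
    have := Multiset.card_nsmul_le_sum h2
    simpa [nsmul_eq_mul] using this
  have hsum : ht S.sum = (Sn.map ht).sum + (Sp.map ht).sum := by
    rw [map_multiset_sum, ← hsplit, Multiset.map_add, Multiset.sum_add]
  have hcard : Multiset.card S = Multiset.card Sn + Multiset.card Sp := by
    rw [← hsplit, Multiset.card_add]
  have hM' : (Multiset.card Sn : ℤ) ≤ M := by exact_mod_cast hM
  have hC0 : (0:ℤ) ≤ (C:ℤ) := Int.natCast_nonneg C
  rw [hsum, hcard]
  push_cast
  nlinarith [hsumP, hsumN, hM', hC0]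

/-- Let `Δ` be a finite root system with weight lattice `P`.  Fix
`λ, ν ∈ P` and `M ∈ ℕ`.  Then there are only finitely many `μ ∈ P` such that both
`λ − μ` and `μ − ν` can be written as a sum of roots containing at most `M` negative
roots each.  ('A sum of roots containing at most `M` negative roots' means a finite
multiset of elements of `Δ = Δ₊ ∪ (−Δ₊)` with the given sum in which the total
multiplicity of negative roots is at most `M`.)  The positive roots have strictly
positive height with respect to an additive height function `ht`. -/
theorem finitely_many_intermediate_weights
    {P : Type*} [AddCommGroup P] [DecidableEq P]
    -- the positive roots
    (Δpos : Finset P)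
    -- the height function, positive on positive roots
    (ht : P →+ ℤ) (hht : ∀ α ∈ Δpos, 0 < ht α)
    (lam nu : P) (M : ℕ) :
    {μ : P |
      (∃ S : Multiset P, (∀ x ∈ S, x ∈ Δpos ∨ -x ∈ Δpos) ∧ Multiset.sum S = lam - μ ∧
        Multiset.card (S.filter fun x => -x ∈ Δpos) ≤ M) ∧
      (∃ T : Multiset P, (∀ x ∈ T, x ∈ Δpos ∨ -x ∈ Δpos) ∧ Multiset.sum T = μ - nu ∧
        Multiset.card (T.filter fun x => -x ∈ Δpos) ≤ M)}.Finite := by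
  classical
  -- bound on heights of positive roots
  set C : ℕ := Δpos.sup fun α => (ht α).toNat with hCdef
  have hC : ∀ α ∈ Δpos, ht α ≤ C := by
    intro α hα
    have h1 : (ht α).toNat ≤ C := Finset.le_sup (f := fun α => (ht α).toNat) hα
    omega
  -- the full set of roots
  set Δfin : Finset P := Δpos ∪ Δpos.image Neg.neg with hΔfin
  -- the cardinality bound
  set K : ℕ := (ht lam - ht nu + 2 * (M * C + M)).toNat with hKdef
  set big : Multiset P := K • Δfin.val with hbig
  have hfin : {m : Multiset P | m ≤ big}.Finite := by
    apply Set.Finite.ofFinset big.powerset.toFinset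
    intro m
    simp [Multiset.mem_powerset]
  apply Set.Finite.subset (hfin.image fun m => lam - m.sum)
  rintro μ ⟨⟨S, hS, hSsum, hSM⟩, ⟨T, hT, hTsum, hTM⟩⟩
  have hSbound := sum_roots_card_bound Δpos ht hht C hC M S hS hSM
  have hTbound := sum_roots_card_bound Δpos ht hht C hC M T hT hTM
  rw [hSsum] at hSbound
  rw [hTsum] at hTbound
  rw [map_sub] at hSbound hTbound
  have hT0 : (0:ℤ) ≤ (Multiset.card T : ℤ) := Int.natCast_nonneg _
  have hScard : (Multiset.card S : ℤ) ≤ ht lam - ht nu + 2 * (M * C + M) := by linarith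
  have hK : Multiset.card S ≤ K := by
    rw [hKdef]; omega
  refine ⟨S, ?_, ?_⟩
  · -- S ≤ big
    show S ≤ big
    rw [Multiset.le_iff_count]
    intro x
    by_cases hx : x ∈ S
    · have hxΔ : x ∈ Δfin := by
        rcases hS x hx with h | h
        · exact Finset.mem_union_left _ h
        · refine Finset.mem_union_right _ ?_
          exact Finset.mem_image.2 ⟨-x, h, neg_neg x⟩
      have hcount : Multiset.count x Δfin.val = 1 :=
        Multiset.count_eq_one_of_mem Δfin.nodup hxΔ
      have h1 : Multiset.count x S ≤ Multiset.card S := Multiset.count_le_card x S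
      rw [hbig, Multiset.count_nsmul, hcount]
      omega
    · simp [Multiset.count_eq_zero_of_notMem hx]
  · -- μ = lam - S.sum
    show lam - S.sum = μ
    rw [hSsum]
    abel
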